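/- With the setup of the previous lemma, if Ψ: L¹(P) → ℝ ∪ {+∞} is convex, proper, and lower semicontinuous w.r.t. σ(L¹, L^∞), then for every Q ∈ Q_≪(P), ψ(Q) = ψ*_ρ(Q); that is, Ψ = Ψ** on densities, where Ψ*(U) = sup_{Z ∈ L¹} (∫ZU dP − Ψ(Z)) = ρ(−U) for U ∈ L^∞(P), and the biconjugate Ψ**(dQ/dP) equals the minimal penalty ψ*_ρ(Q). -/

import Mathlib

open MeasureTheory
open scoped ENNReal

variable {Ω : Type*} [MeasurableSpace Ω]

/-- Bounded measurable function. -/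
def IsBddMeas (X : Ω → ℝ) : Prop :=
  Measurable X ∧ ∃ C : ℝ, ∀ ω, |X ω| ≤ C

/-- The minimal penalty function of `ρ`, given through the biduality/conjugacy formula
`ψ*_ρ(Q) = sup_{X bounded measurable} (E_Q[-X] - ρ(X))`. -/
noncomputable def minPenalty (ρ : (Ω → ℝ) → EReal) (Q : Measure Ω) : EReal :=
  ⨆ X : {X : Ω → ℝ // IsBddMeas X},
    (((∫ ω, -(X.1 ω) ∂Q : ℝ) : EReal) - ρ X.1)

namespace FMaux

section L1rep

variable {P : Measure Ω} [IsProbabilityMeasure P]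


/-- inclusion of L² into L¹ for a probability measure -/
noncomputable def incl (g : Lp ℝ 2 P) : Lp ℝ 1 P :=
  ((Lp.memLp g).mono_exponent (by norm_num)).toLp g

lemma incl_coeFn (g : Lp ℝ 2 P) : (incl g : Ω → ℝ) =ᵐ[P] g :=
  MemLp.coeFn_toLp _

lemma incl_norm_le (g : Lp ℝ 2 P) : ‖incl (P := P) g‖ ≤ ‖g‖ := by
  rw [Lp.norm_def, Lp.norm_def]
  have h1 : eLpNorm (incl (P := P) g) 1 P = eLpNorm g 1 P :=
    eLpNorm_congr_ae (incl_coeFn g)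
  rw [h1]
  refine ENNReal.toReal_mono (Lp.eLpNorm_ne_top g) ?_
  exact eLpNorm_le_eLpNorm_of_exponent_le (by norm_num) (Lp.aestronglyMeasurable g)

lemma incl_add (g h : Lp ℝ 2 P) : incl (g + h) = incl g + incl h := by
  refine Lp.ext ?_
  filter_upwards [incl_coeFn (g + h), incl_coeFn g, incl_coeFn h, Lp.coeFn_add g h,
    Lp.coeFn_add (incl g) (incl h)] with ω h1 h2 h3 h4 h5
  rw [h1, h5, h4, Pi.add_apply, Pi.add_apply, h2, h3]

lemma incl_smul (c : ℝ) (g : Lp ℝ 2 P) : incl (c • g) = c • incl g := by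
  refine Lp.ext ?_
  filter_upwards [incl_coeFn (c • g), incl_coeFn g, Lp.coeFn_smul c g,
    Lp.coeFn_smul c (incl g)] with ω h1 h2 h3 h4
  rw [h1, h4, h3, Pi.smul_apply, Pi.smul_apply, h2]


theorem rep (φ : Lp ℝ 1 P →L[ℝ] ℝ) :
    ∃ X : Ω → ℝ, IsBddMeas X ∧ ∀ f : Lp ℝ 1 P, φ f = ∫ ω, (f : Ω → ℝ) ω * X ω ∂P := by
  classical
  set C := ‖φ‖ with hC
  have hC0 : 0 ≤ C := norm_nonneg φ
  -- the restriction of φ to L²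
  let φ₂L : Lp ℝ 2 P →ₗ[ℝ] ℝ :=
    { toFun := fun g => φ (incl g)
      map_add' := fun g h => by
        show φ (incl (g + h)) = φ (incl g) + φ (incl h)
        rw [incl_add, map_add]
      map_smul' := fun c g => by
        show φ (incl (c • g)) = c • φ (incl g)
        rw [incl_smul]; exact φ.map_smul c (incl g) }
  have hφ₂bound : ∀ g : Lp ℝ 2 P, ‖φ₂L g‖ ≤ C * ‖g‖ := by
    intro g
    calc ‖φ (incl g)‖ ≤ C * ‖incl (P := P) g‖ := φ.le_opNorm _
    _ ≤ C * ‖g‖ := mul_le_mul_of_nonneg_left (incl_norm_le g) hC0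
  let φ₂ : Lp ℝ 2 P →L[ℝ] ℝ := LinearMap.mkContinuous φ₂L C hφ₂bound
  have hφ₂ : ∀ g : Lp ℝ 2 P, φ₂ g = φ (incl g) := fun g => rfl
  -- Riesz representation on L²
  set g₀ : Lp ℝ 2 P := (InnerProductSpace.toDual ℝ (Lp ℝ 2 P)).symm φ₂ with hg₀def
  have hg₀ : ∀ g : Lp ℝ 2 P, (inner ℝ g₀ g : ℝ) = φ₂ g := fun g =>
    InnerProductSpace.toDual_symm_apply
  have hinner : ∀ g : Lp ℝ 2 P, (inner ℝ g₀ g : ℝ) = ∫ ω, (g₀ : Ω → ℝ) ω * (g : Ω → ℝ) ω ∂P := by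
    intro g
    rw [L2.inner_def]
    simp [RCLike.inner_apply, conj_trivial]
    exact integral_congr_ae (Filter.Eventually.of_forall fun ω => mul_comm _ _)
  have hg₀int : Integrable (g₀ : Ω → ℝ) P :=
    memLp_one_iff_integrable.mp ((Lp.memLp g₀).mono_exponent (by norm_num))
  -- set integrals of g₀ are controlled by C * P s
  have hset : ∀ s : Set Ω, MeasurableSet s → |∫ ω in s, (g₀ : Ω → ℝ) ω ∂P| ≤ C * (P s).toReal := by
    intro s hs
    have hμs : P s ≠ ∞ := measure_ne_top P s
    have h1 : (inner ℝ (indicatorConstLp 2 hs hμs (1 : ℝ)) g₀ : ℝ) = ∫ ω in s, (g₀ : Ω → ℝ) ω ∂P :=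
      L2.inner_indicatorConstLp_one hs hμs g₀
    have h2 : ∫ ω in s, (g₀ : Ω → ℝ) ω ∂P = φ₂ (indicatorConstLp 2 hs hμs (1 : ℝ)) := by
      rw [← h1, real_inner_comm, hg₀]
    have h3 : ‖incl (P := P) (indicatorConstLp 2 hs hμs (1 : ℝ))‖ = (P s).toReal := by
      rw [Lp.norm_def]
      have h5 : eLpNorm (incl (P := P) (indicatorConstLp 2 hs hμs (1 : ℝ))) 1 P
          = eLpNorm (s.indicator fun _ => (1 : ℝ)) 1 P :=
        eLpNorm_congr_ae ((incl_coeFn _).trans indicatorConstLp_coeFn)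
      rw [h5, eLpNorm_indicator_const hs one_ne_zero ENNReal.one_ne_top]
      simp
    rw [h2, hφ₂]
    calc |φ (incl (indicatorConstLp 2 hs hμs (1 : ℝ)))|
        ≤ C * ‖incl (P := P) (indicatorConstLp 2 hs hμs (1 : ℝ))‖ := φ.le_opNorm _
    _ = C * (P s).toReal := by rw [h3]
  -- hence |g₀| ≤ C a.e.
  have hupper : ∀ᵐ ω ∂P, (g₀ : Ω → ℝ) ω ≤ C := by
    refine ae_le_of_forall_setIntegral_le (μ := P) hg₀int (integrable_const C) ?_
    intro s hs _
    rw [setIntegral_const]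
    have h4 := (abs_le.mp (hset s hs)).2
    calc ∫ ω in s, (g₀ : Ω → ℝ) ω ∂P ≤ C * (P s).toReal := h4
    _ = (P s).toReal • C := by rw [smul_eq_mul]; ring
  have hlower : ∀ᵐ ω ∂P, -C ≤ (g₀ : Ω → ℝ) ω := by
    refine ae_le_of_forall_setIntegral_le (μ := P) (integrable_const (-C)) hg₀int ?_
    intro s hs _
    rw [setIntegral_const]
    have h4 := (abs_le.mp (hset s hs)).1
    calc (P s).toReal • (-C) = -(C * (P s).toReal) := by rw [smul_eq_mul]; ring
    _ ≤ _ := h4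
  -- a bounded measurable representative
  have hsm := (Lp.aestronglyMeasurable g₀)
  set X : Ω → ℝ := fun ω => max (-C) (min (hsm.mk _ ω) C) with hXdef
  have hXmeas : Measurable X :=
    measurable_const.max ((hsm.stronglyMeasurable_mk.measurable).min measurable_const)
  have hXbdd : ∀ ω, |X ω| ≤ C := by
    intro ω
    rw [abs_le]
    exact ⟨le_max_left _ _, max_le (by linarith) (min_le_right _ _)⟩
  have hXae : X =ᵐ[P] (g₀ : Ω → ℝ) := by
    filter_upwards [hupper, hlower, hsm.ae_eq_mk] with ω h1 h2 h3
    rw [hXdef]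
    simp only [← h3]
    rw [min_eq_left h1, max_eq_right h2]
  -- integrability of products
  have hint : ∀ f : Lp ℝ 1 P, Integrable (fun ω => (f : Ω → ℝ) ω * X ω) P := by
    intro f
    have h1 : Integrable (fun ω => X ω * (f : Ω → ℝ) ω) P :=
      (L1.integrable_coeFn f).bdd_mul hXmeas.aestronglyMeasurable
        (c := C) (Filter.Eventually.of_forall fun ω => by simpa [Real.norm_eq_abs] using hXbdd ω)
    exact h1.congr (Filter.Eventually.of_forall fun ω => mul_comm _ _)
  set ℓ : Lp ℝ 1 P → ℝ := fun f => ∫ ω, (f : Ω → ℝ) ω * X ω ∂P with hℓdef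
  have hℓbound : ∀ f : Lp ℝ 1 P, |ℓ f| ≤ C * ‖f‖ := by
    intro f
    have h2 : |ℓ f| ≤ ∫ ω, |(f : Ω → ℝ) ω * X ω| ∂P := by
      have := norm_integral_le_integral_norm (μ := P) (fun ω => (f : Ω → ℝ) ω * X ω)
      simpa only [Real.norm_eq_abs] using this
    have h3 : ∫ ω, |(f : Ω → ℝ) ω * X ω| ∂P ≤ ∫ ω, C * |(f : Ω → ℝ) ω| ∂P := by
      refine integral_mono (hint f).abs (((L1.integrable_coeFn f).abs.const_mul C)) ?_
      intro ω
      dsimp only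
      rw [abs_mul]
      exact (mul_le_mul_of_nonneg_left (hXbdd ω) (abs_nonneg _)).trans_eq (mul_comm _ _)
    have h4 : ∫ ω, C * |(f : Ω → ℝ) ω| ∂P = C * ‖f‖ := by
      rw [integral_const_mul, L1.norm_eq_integral_norm]
      simp [Real.norm_eq_abs]
    exact h2.trans (h3.trans h4.le)
  have hℓcont : Continuous ℓ := by
    refine (LipschitzWith.of_dist_le_mul (K := C.toNNReal) ?_).continuous
    intro f g
    rw [dist_eq_norm, dist_eq_norm, Real.norm_eq_abs]
    have h1 : ℓ f - ℓ g = ℓ (f - g) := by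
      rw [hℓdef]
      simp only
      rw [← integral_sub (hint f) (hint g)]
      refine integral_congr_ae ?_
      filter_upwards [Lp.coeFn_sub f g] with ω hω
      rw [hω]
      simp only [Pi.sub_apply]
      ring
    rw [h1]
    calc |ℓ (f - g)| ≤ C * ‖f - g‖ := hℓbound _
    _ = (C.toNNReal : ℝ) * ‖f - g‖ := by rw [Real.coe_toNNReal _ hC0]
  -- density of the range of incl
  have hdense : Dense (Set.range (incl (P := P))) := by
    have h1 : DenseRange ((↑) : Lp.simpleFunc ℝ 1 P → Lp ℝ 1 P) :=
      Lp.simpleFunc.denseRange ENNReal.one_ne_top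
    refine Dense.mono ?_ h1
    rintro _ ⟨s, rfl⟩
    set sf := Lp.simpleFunc.toSimpleFunc s with hsf
    obtain ⟨B, hB⟩ := sf.exists_forall_norm_le
    have hmem2 : MemLp (sf : Ω → ℝ) 2 P :=
      (memLp_top_of_bound sf.stronglyMeasurable.aestronglyMeasurable B
        (Filter.Eventually.of_forall hB)).mono_exponent le_top
    refine ⟨hmem2.toLp sf, ?_⟩
    refine Lp.ext ?_
    exact (incl_coeFn _).trans ((hmem2.coeFn_toLp).trans (Lp.simpleFunc.toSimpleFunc_eq_toFun s))
  -- conclude by continuity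
  have hEq : (fun f : Lp ℝ 1 P => φ f) = ℓ := by
    refine Continuous.ext_on hdense φ.continuous hℓcont ?_
    rintro _ ⟨g, rfl⟩
    show φ (incl g) = ∫ ω, (incl g : Ω → ℝ) ω * X ω ∂P
    have h1 : φ (incl g) = ∫ ω, (g₀ : Ω → ℝ) ω * (g : Ω → ℝ) ω ∂P := by
      rw [← hφ₂, ← hg₀, hinner]
    rw [h1]
    refine integral_congr_ae ?_
    filter_upwards [incl_coeFn g, hXae] with ω h2 h3
    rw [h2, h3]
    ring
  exact ⟨X, ⟨hXmeas, C, hXbdd⟩, fun f => congrFun hEq f⟩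


end L1rep

section FenchelMoreau

variable {E : Type*} [NormedAddCommGroup E] [NormedSpace ℝ E]

instance instContSMulWeak : ContinuousSMul ℝ (WeakSpace ℝ E) :=
  WeakBilin.instContinuousSMul (topDualPairing ℝ E).flip

instance instLCSWeak : LocallyConvexSpace ℝ (WeakSpace ℝ E) :=
  WeakBilin.locallyConvexSpace (B := (topDualPairing ℝ E).flip)

noncomputable def conj (Ψ : E → EReal) (φ : E →L[ℝ] ℝ) : EReal :=
  ⨆ f : E, (((φ f : ℝ) : EReal) - Ψ f)

theorem sep (Ψ : E → EReal) (hproper : ∃ D, Ψ D ≠ ⊤) (hne_bot : ∀ D, Ψ D ≠ ⊥)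
    (hconvex : ∀ D₁ D₂ : E, ∀ a b : ℝ, 0 ≤ a → 0 ≤ b → a + b = 1 →
      Ψ (a • D₁ + b • D₂) ≤ (a : EReal) * Ψ D₁ + (b : EReal) * Ψ D₂)
    (hlsc : LowerSemicontinuous (fun z : WeakSpace ℝ E => Ψ ((toWeakSpace ℝ E).symm z)))
    (D : E) (c : ℝ) (hc : (c : EReal) < Ψ D) :
    ∃ (φ : E →L[ℝ] ℝ) (a s : ℝ), 0 ≤ a ∧ φ D + a * c < s ∧
      (∀ f : E, ∀ t : ℝ, Ψ f ≤ (t : EReal) → s < φ f + a * t) ∧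
      (Ψ D ≠ ⊤ → 0 < a) := by
  classical
  set Ψ' : WeakSpace ℝ E → EReal := fun z => Ψ ((toWeakSpace ℝ E).symm z) with hΨ'
  have hΨ'app : ∀ f : E, Ψ' (toWeakSpace ℝ E f) = Ψ f := by
    intro f
    simp only [hΨ', LinearEquiv.symm_apply_apply]
  set S : Set (WeakSpace ℝ E × ℝ) := {p | Ψ' p.1 ≤ (p.2 : EReal)} with hS
  have hSclosed : IsClosed S := by
    have h1 : IsClosed {p : WeakSpace ℝ E × EReal | Ψ' p.1 ≤ p.2} :=
      lowerSemicontinuous_iff_isClosed_epigraph.mp hlsc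
    have h2 : Continuous (fun p : WeakSpace ℝ E × ℝ => ((p.1, (p.2 : EReal)) : WeakSpace ℝ E × EReal)) :=
      Continuous.prodMk continuous_fst (continuous_coe_real_ereal.comp continuous_snd)
    exact h1.preimage h2
  have hSconv : Convex ℝ S := by
    rintro ⟨z1, t1⟩ h1 ⟨z2, t2⟩ h2 a b ha hb hab
    simp only [hS, Set.mem_setOf_eq] at h1 h2 ⊢
    have key : Ψ' (a • z1 + b • z2) ≤ (a : EReal) * Ψ' z1 + (b : EReal) * Ψ' z2 := by
      have h3 : (toWeakSpace ℝ E).symm (a • z1 + b • z2)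
          = a • (toWeakSpace ℝ E).symm z1 + b • (toWeakSpace ℝ E).symm z2 := by
        simp only [map_add, LinearEquiv.map_smul]
      calc Ψ' (a • z1 + b • z2)
          = Ψ (a • (toWeakSpace ℝ E).symm z1 + b • (toWeakSpace ℝ E).symm z2) := by
            rw [hΨ']; simp only; rw [h3]
        _ ≤ (a : EReal) * Ψ ((toWeakSpace ℝ E).symm z1)
            + (b : EReal) * Ψ ((toWeakSpace ℝ E).symm z2) :=
            hconvex _ _ a b ha hb hab
    refine key.trans ?_
    have m1 : (a : EReal) * Ψ' z1 ≤ (a : EReal) * (t1 : EReal) := by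
      exact _root_.mul_le_mul_of_nonneg_left h1 (by exact_mod_cast ha)
    have m2 : (b : EReal) * Ψ' z2 ≤ (b : EReal) * (t2 : EReal) := by
      exact _root_.mul_le_mul_of_nonneg_left h2 (by exact_mod_cast hb)
    calc (a : EReal) * Ψ' z1 + (b : EReal) * Ψ' z2
        ≤ (a : EReal) * (t1 : EReal) + (b : EReal) * (t2 : EReal) := add_le_add m1 m2
      _ = ((a * t1 + b * t2 : ℝ) : EReal) := by
          rw [← EReal.coe_mul, ← EReal.coe_mul, ← EReal.coe_add]
  have hpoint : ((toWeakSpace ℝ E D, c) : WeakSpace ℝ E × ℝ) ∉ S := by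
    simp only [hS, Set.mem_setOf_eq, hΨ'app]
    exact not_le.mpr hc
  obtain ⟨Λ, u, hΛ1, hΛ2⟩ := geometric_hahn_banach_point_closed hSconv hSclosed hpoint
  set a : ℝ := Λ (0, 1) with ha_def
  have hΛsplit : ∀ (z : WeakSpace ℝ E) (t : ℝ), Λ (z, t) = Λ (z, 0) + t * a := by
    intro z t
    have : ((z, t) : WeakSpace ℝ E × ℝ) = (z, 0) + t • (0, 1) := by
      simp [Prod.ext_iff]
    rw [this, map_add, Λ.map_smul, smul_eq_mul]
  set φ : E →L[ℝ] ℝ := Λ.comp ((toWeakSpaceCLM ℝ E).prod 0) with hφdef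
  have hφapp : ∀ f : E, φ f = Λ (toWeakSpace ℝ E f, 0) := by
    intro f
    simp [hφdef, ContinuousLinearMap.prod_apply, toWeakSpaceCLM_eq_toWeakSpace]
  have hsep1 : φ D + c * a < u := by
    rw [hφapp]
    have := hΛ1
    rw [hΛsplit _ c] at this
    exact this
  have hsep2 : ∀ f : E, ∀ t : ℝ, Ψ f ≤ (t : EReal) → u < φ f + t * a := by
    intro f t hft
    have hmem : ((toWeakSpace ℝ E f, t) : WeakSpace ℝ E × ℝ) ∈ S := by
      simp only [hS, Set.mem_setOf_eq, hΨ'app]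
      exact hft
    have := hΛ2 _ hmem
    rw [hΛsplit _ t, ← hφapp] at this
    exact this
  -- a is nonnegative
  obtain ⟨f₀, hf₀⟩ := hproper
  have hf₀r : Ψ f₀ = (((Ψ f₀).toReal : ℝ) : EReal) := (EReal.coe_toReal hf₀ (hne_bot f₀)).symm
  set t₀ : ℝ := (Ψ f₀).toReal with ht₀
  have hseq : ∀ n : ℕ, u < φ f₀ + (t₀ + n) * a := by
    intro n
    refine hsep2 f₀ (t₀ + n) ?_
    rw [hf₀r]
    exact_mod_cast by linarith [Nat.cast_nonneg (α := ℝ) n]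
  have ha_nonneg : 0 ≤ a := by
    by_contra h
    push_neg at h
    obtain ⟨n, hn⟩ := exists_nat_gt ((φ f₀ + t₀ * a - u) / (-a))
    have h2 : (φ f₀ + t₀ * a - u) < n * (-a) := by
      rw [div_lt_iff₀ (by linarith : (0:ℝ) < -a)] at hn
      linarith [hn]
    have h3 := hseq n
    nlinarith
  refine ⟨φ, a, u, ha_nonneg, ?_, ?_, ?_⟩
  · calc φ D + a * c = φ D + c * a := by ring
    _ < u := hsep1
  · intro f t hft
    calc u < φ f + t * a := hsep2 f t hft
    _ = φ f + a * t := by ring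
  · intro hD
    rcases lt_or_eq_of_le ha_nonneg with h | h
    · exact h
    · exfalso
      have hDr : Ψ D = (((Ψ D).toReal : ℝ) : EReal) := (EReal.coe_toReal hD (hne_bot D)).symm
      have h1 : u < φ D + (Ψ D).toReal * a := hsep2 D (Ψ D).toReal (le_of_eq hDr)
      rw [← h] at h1 hsep1
      simp at h1 hsep1
      linarith

theorem fm_pos (Ψ : E → EReal) (hne_bot : ∀ D, Ψ D ≠ ⊥)
    (D : E) (c : ℝ) (φ₀ : E →L[ℝ] ℝ) (a s : ℝ) (ha : 0 < a)
    (h1 : φ₀ D + a * c < s)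
    (h2 : ∀ f : E, ∀ t : ℝ, Ψ f ≤ (t : EReal) → s < φ₀ f + a * t) :
    ∃ φ : E →L[ℝ] ℝ, (c : EReal) < ((φ D : ℝ) : EReal) - conj Ψ φ := by
  set φ : E →L[ℝ] ℝ := (-(a⁻¹)) • φ₀ with hφdef
  have hφapp : ∀ f : E, φ f = -(a⁻¹) * φ₀ f := fun f => rfl
  have hainv : a * a⁻¹ = 1 := mul_inv_cancel₀ ha.ne'
  have hconj : conj Ψ φ ≤ ((-s / a : ℝ) : EReal) := by
    refine iSup_le fun f => ?_
    by_cases hf : Ψ f = ⊤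
    · rw [hf, EReal.sub_top]
      exact bot_le
    · have hfr : ((Ψ f).toReal : EReal) = Ψ f := EReal.coe_toReal hf (hne_bot f)
      rw [← hfr, ← EReal.coe_sub]
      rw [EReal.coe_le_coe_iff]
      have h3 := h2 f (Ψ f).toReal (le_of_eq hfr.symm)
      rw [hφapp, div_eq_mul_inv]
      have h4 : a⁻¹ * s < a⁻¹ * φ₀ f + (Ψ f).toReal := by
        calc a⁻¹ * s < a⁻¹ * (φ₀ f + a * (Ψ f).toReal) :=
              mul_lt_mul_of_pos_left h3 (inv_pos.mpr ha)
        _ = a⁻¹ * φ₀ f + (a * a⁻¹) * (Ψ f).toReal := by ring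
        _ = a⁻¹ * φ₀ f + (Ψ f).toReal := by rw [hainv]; ring
      linarith
  have hval : c < φ D + s / a := by
    rw [hφapp, div_eq_mul_inv]
    have h4 : a⁻¹ * φ₀ D + c < a⁻¹ * s := by
      calc a⁻¹ * φ₀ D + c = a⁻¹ * φ₀ D + (a * a⁻¹) * c := by rw [hainv]; ring
      _ = a⁻¹ * (φ₀ D + a * c) := by ring
      _ < a⁻¹ * s := mul_lt_mul_of_pos_left h1 (inv_pos.mpr ha)
    linarith
  refine ⟨φ, ?_⟩
  calc (c : EReal) < ((φ D + s / a : ℝ) : EReal) := by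
        rw [EReal.coe_lt_coe_iff]; exact hval
    _ = ((φ D : ℝ) : EReal) - ((-s / a : ℝ) : EReal) := by
        rw [← EReal.coe_sub]
        congr 1
        ring
    _ ≤ ((φ D : ℝ) : EReal) - conj Ψ φ := EReal.sub_le_sub le_rfl hconj

theorem fm (Ψ : E → EReal) (hproper : ∃ D, Ψ D ≠ ⊤) (hne_bot : ∀ D, Ψ D ≠ ⊥)
    (hconvex : ∀ D₁ D₂ : E, ∀ a b : ℝ, 0 ≤ a → 0 ≤ b → a + b = 1 →
      Ψ (a • D₁ + b • D₂) ≤ (a : EReal) * Ψ D₁ + (b : EReal) * Ψ D₂)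
    (hlsc : LowerSemicontinuous (fun z : WeakSpace ℝ E => Ψ ((toWeakSpace ℝ E).symm z)))
    (D : E) (c : ℝ) (hc : (c : EReal) < Ψ D) :
    ∃ φ : E →L[ℝ] ℝ, (c : EReal) < ((φ D : ℝ) : EReal) - conj Ψ φ := by
  obtain ⟨φ₀, a, s, ha0, h1, h2, hpos⟩ := sep Ψ hproper hne_bot hconvex hlsc D c hc
  rcases lt_or_eq_of_le ha0 with hapos | haz
  · exact fm_pos Ψ hne_bot D c φ₀ a s hapos h1 h2
  -- the case a = 0
  obtain ⟨f₀, hf₀⟩ := hproper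
  set t₀ : ℝ := (Ψ f₀).toReal with ht₀def
  have hf₀r : (t₀ : EReal) = Ψ f₀ := EReal.coe_toReal hf₀ (hne_bot f₀)
  have hc₀ : ((t₀ - 1 : ℝ) : EReal) < Ψ f₀ := by
    rw [← hf₀r, EReal.coe_lt_coe_iff]
    linarith
  obtain ⟨φ₀', a', s', _, h1', h2', hpos'⟩ :=
    sep Ψ ⟨f₀, hf₀⟩ hne_bot hconvex hlsc f₀ _ hc₀
  obtain ⟨φ₁, hφ₁⟩ := fm_pos Ψ hne_bot f₀ _ φ₀' a' s' (hpos' hf₀) h1' h2'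
  have hconj_netop : conj Ψ φ₁ ≠ ⊤ := by
    intro h
    rw [h, EReal.sub_top] at hφ₁
    exact not_lt_bot hφ₁
  have hconj_nebot : conj Ψ φ₁ ≠ ⊥ := by
    have hge : ((φ₁ f₀ : ℝ) : EReal) - Ψ f₀ ≤ conj Ψ φ₁ :=
      le_iSup (fun f => ((φ₁ f : ℝ) : EReal) - Ψ f) f₀
    refine ne_bot_of_le_ne_bot ?_ hge
    rw [← hf₀r, ← EReal.coe_sub]
    exact EReal.coe_ne_bot _
  set r₁ := (conj Ψ φ₁).toReal with hr₁def
  have hr₁ : (r₁ : EReal) = conj Ψ φ₁ := EReal.coe_toReal hconj_netop hconj_nebot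
  rw [← haz] at h1 h2
  simp only [zero_mul, add_zero] at h1 h2
  have hgap : 0 < s - φ₀ D := by linarith
  obtain ⟨n, hn⟩ := exists_nat_gt ((c - (φ₁ D - r₁)) / (s - φ₀ D))
  set φ : E →L[ℝ] ℝ := φ₁ - (n : ℝ) • φ₀ with hφdef
  have hφapp : ∀ f : E, φ f = φ₁ f - (n : ℝ) * φ₀ f := fun f => rfl
  have hconjφ : conj Ψ φ ≤ ((r₁ - n * s : ℝ) : EReal) := by
    refine iSup_le fun f => ?_
    by_cases hf : Ψ f = ⊤
    · rw [hf, EReal.sub_top]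
      exact bot_le
    · have hfr : ((Ψ f).toReal : EReal) = Ψ f := EReal.coe_toReal hf (hne_bot f)
      have hA : φ₁ f - (Ψ f).toReal ≤ r₁ := by
        rw [← EReal.coe_le_coe_iff (y := r₁), EReal.coe_sub, hfr, hr₁]
        exact le_iSup (fun g => ((φ₁ g : ℝ) : EReal) - Ψ g) f
      have hB : s < φ₀ f := h2 f (Ψ f).toReal (le_of_eq hfr.symm)
      have hns : (n : ℝ) * s ≤ (n : ℝ) * φ₀ f :=
        mul_le_mul_of_nonneg_left hB.le (Nat.cast_nonneg n)
      rw [← hfr, ← EReal.coe_sub, EReal.coe_le_coe_iff, hφapp]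
      linarith
  have hval : c < φ D - (r₁ - n * s) := by
    rw [hφapp]
    rw [div_lt_iff₀ hgap] at hn
    linarith
  refine ⟨φ, ?_⟩
  calc (c : EReal) < ((φ D - (r₁ - n * s) : ℝ) : EReal) := by
        rw [EReal.coe_lt_coe_iff]; exact hval
    _ = ((φ D : ℝ) : EReal) - ((r₁ - n * s : ℝ) : EReal) := by rw [← EReal.coe_sub]
    _ ≤ ((φ D : ℝ) : EReal) - conj Ψ φ := EReal.sub_le_sub le_rfl hconjφ

end FenchelMoreau

section ERealAux

lemma sub_swap_le (a : ℝ) (y r : EReal) (hy : y ≠ ⊥) (h : (a : EReal) - y ≤ r) :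
    (a : EReal) - r ≤ y := by
  induction r using EReal.rec with
  | bot =>
      have hbot : (a : EReal) - y = ⊥ := le_bot_iff.mp h
      have hy_top : y = ⊤ := by
        by_contra hyt
        have hyr : ((y.toReal : ℝ) : EReal) = y := EReal.coe_toReal hyt hy
        rw [← hyr, ← EReal.coe_sub] at hbot
        exact EReal.coe_ne_bot _ hbot
      rw [hy_top]
      exact le_top
  | coe r =>
      induction y using EReal.rec with
      | bot => exact absurd rfl hy
      | top => exact le_top
      | coe y =>
          rw [← EReal.coe_sub] at h ⊢
          rw [EReal.coe_le_coe_iff] at h ⊢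
          linarith
  | top =>
      rw [EReal.sub_top]
      exact bot_le

theorem measure_eq_of_density_ae_eq (P Q Q' : Measure Ω) [IsProbabilityMeasure P]
    [IsFiniteMeasure Q] [IsFiniteMeasure Q']
    (hQ : Q ≪ P) (hQ' : Q' ≪ P)
    (h : (fun ω => (Q.rnDeriv P ω).toReal) =ᵐ[P] fun ω => (Q'.rnDeriv P ω).toReal) : Q = Q' := by
  have h2 : Q.rnDeriv P =ᵐ[P] Q'.rnDeriv P := by
    filter_upwards [h, Measure.rnDeriv_lt_top Q P, Measure.rnDeriv_lt_top Q' P]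
      with ω h1 hlt hlt'
    exact (ENNReal.toReal_eq_toReal_iff' hlt.ne hlt'.ne).mp h1
  calc Q = P.withDensity (Q.rnDeriv P) := (Measure.withDensity_rnDeriv_eq Q P hQ).symm
  _ = P.withDensity (Q'.rnDeriv P) := withDensity_congr_ae h2
  _ = Q' := Measure.withDensity_rnDeriv_eq Q' P hQ'

end ERealAux

end FMaux

/-- In the setting of the previous lemma, if the identification `Ψ` of the
penalty `ψ` on `L¹(P)` is proper, convex and lower semicontinuous w.r.t. `σ(L¹, L^∞)`, then
`ψ` coincides with the minimal penalty `ψ*_ρ` of `ρ(X) = sup_{Q∈K}(E_Q[-X] - ψ(Q))` on the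
set of all probability measures absolutely continuous w.r.t. `P`
(`Ψ = Ψ**` on densities; `Ψ*(U) = ρ(-U)` is the Fenchel–Legendre conjugate). -/
theorem identification_lsc_implies_minimal_penalty
    (P : Measure Ω) [IsProbabilityMeasure P]
    (K : Set (Measure Ω))
    (hKsub : ∀ Q ∈ K, IsProbabilityMeasure Q ∧ Q ≪ P)
    (hKconv : ∀ Q ∈ K, ∀ Q' ∈ K, ∀ a b : ℝ≥0∞, a + b = 1 → a • Q + b • Q' ∈ K)
    (hKclosed : IsClosed {f : Lp ℝ 1 P |
      ∃ Q ∈ K, (f : Ω → ℝ) =ᵐ[P] fun ω => (Q.rnDeriv P ω).toReal})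
    (ψ : Measure Ω → EReal)
    (hψ_ne_bot : ∀ Q, ψ Q ≠ ⊥)
    (hψ_top : ∀ Q, Q ∉ K → ψ Q = ⊤)
    (hinf_ne_bot : (⨅ Q ∈ K, ψ Q) ≠ ⊥) (hinf_ne_top : (⨅ Q ∈ K, ψ Q) ≠ ⊤)
    (ρ : (Ω → ℝ) → EReal)
    (hρ : ∀ X : Ω → ℝ,
      ρ X = ⨆ Q ∈ K, (((∫ ω, -X ω ∂Q : ℝ) : EReal) - ψ Q))
    (Ψ : Lp ℝ 1 P → EReal)
    (hΨ_on : ∀ Q ∈ K, ∀ D : Lp ℝ 1 P,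
      ((D : Ω → ℝ) =ᵐ[P] fun ω => (Q.rnDeriv P ω).toReal) → Ψ D = ψ Q)
    (hΨ_off : ∀ D : Lp ℝ 1 P,
      (¬ ∃ Q ∈ K, (D : Ω → ℝ) =ᵐ[P] fun ω => (Q.rnDeriv P ω).toReal) → Ψ D = ⊤)
    -- Ψ is proper:
    (hproper : ∃ D, Ψ D ≠ ⊤) (hne_bot : ∀ D, Ψ D ≠ ⊥)
    -- Ψ is convex:
    (hconvex : ∀ D₁ D₂ : Lp ℝ 1 P, ∀ a b : ℝ, 0 ≤ a → 0 ≤ b → a + b = 1 →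
      Ψ (a • D₁ + b • D₂) ≤ (a : EReal) * Ψ D₁ + (b : EReal) * Ψ D₂)
    -- Ψ is lower semicontinuous w.r.t. the weak topology σ(L¹, L^∞):
    (hlsc : LowerSemicontinuous (fun z : WeakSpace ℝ (Lp ℝ 1 P) =>
      Ψ ((toWeakSpace ℝ (Lp ℝ 1 P)).symm z))) :
    ∀ Q : Measure Ω, IsProbabilityMeasure Q → Q ≪ P → ψ Q = minPenalty ρ Q := by
  classical
  intro Q hQprob hQP
  haveI := hQprob
  -- integral representation formula for densities
  have hIF : ∀ (Q' : Measure Ω), IsProbabilityMeasure Q' → Q' ≪ P → ∀ (D' : Lp ℝ 1 P),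
      ((D' : Ω → ℝ) =ᵐ[P] fun ω => (Q'.rnDeriv P ω).toReal) →
      ∀ g : Ω → ℝ, ∫ ω, g ω ∂Q' = ∫ ω, (D' : Ω → ℝ) ω * g ω ∂P := by
    intro Q' hprob hac D' hae g
    haveI := hprob
    rw [← MeasureTheory.integral_rnDeriv_smul hac (f := g)]
    refine integral_congr_ae ?_
    filter_upwards [hae] with ω h
    rw [h, smul_eq_mul]
  -- the canonical density of Q in L¹
  have hQint : Integrable (fun ω => (Q.rnDeriv P ω).toReal) P :=
    Measure.integrable_toReal_rnDeriv
  have hQmem : MemLp (fun ω => (Q.rnDeriv P ω).toReal) 1 P :=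
    memLp_one_iff_integrable.mpr hQint
  set D : Lp ℝ 1 P := hQmem.toLp _ with hDdef
  have hDae : (D : Ω → ℝ) =ᵐ[P] fun ω => (Q.rnDeriv P ω).toReal := hQmem.coeFn_toLp
  have hΨD : Ψ D = ψ Q := by
    by_cases hQK : Q ∈ K
    · exact hΨ_on Q hQK D hDae
    · rw [hψ_top Q hQK]
      refine hΨ_off D ?_
      rintro ⟨Q', hQ'K, hae⟩
      haveI := (hKsub Q' hQ'K).1
      have : Q = Q' := by
        refine FMaux.measure_eq_of_density_ae_eq P Q Q' hQP (hKsub Q' hQ'K).2 ?_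
        exact (hDae.symm.trans hae)
      exact hQK (this ▸ hQ'K)
  -- densities of elements of K
  have hdens : ∀ Q' ∈ K, ∃ D' : Lp ℝ 1 P,
      ((D' : Ω → ℝ) =ᵐ[P] fun ω => (Q'.rnDeriv P ω).toReal) := by
    intro Q' hQ'K
    haveI := (hKsub Q' hQ'K).1
    have h1 : Integrable (fun ω => (Q'.rnDeriv P ω).toReal) P :=
      Measure.integrable_toReal_rnDeriv
    have h2 : MemLp (fun ω => (Q'.rnDeriv P ω).toReal) 1 P := memLp_one_iff_integrable.mpr h1
    exact ⟨h2.toLp _, h2.coeFn_toLp⟩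
  -- relation between ρ and the conjugate of Ψ
  refine le_antisymm ?_ ?_
  · -- hard direction : ψ Q ≤ minPenalty ρ Q
    rw [← hΨD]
    by_contra hcon
    push_neg at hcon
    obtain ⟨c, hc1, hc2⟩ := EReal.exists_between_coe_real hcon
    obtain ⟨φ, hφ⟩ := FMaux.fm Ψ hproper hne_bot hconvex hlsc D c hc2
    obtain ⟨X, hXbdd, hXrep⟩ := FMaux.rep φ
    -- the X of the minPenalty formula
    set Y : Ω → ℝ := fun ω => -X ω with hYdef
    have hYbdd : IsBddMeas Y := by
      obtain ⟨hm, C, hC⟩ := hXbdd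
      exact ⟨hm.neg, C, fun ω => by simpa [hYdef, abs_neg] using hC ω⟩
    -- φ applied to a density is the Q'-integral of X
    have hφdens : ∀ (Q' : Measure Ω), IsProbabilityMeasure Q' → Q' ≪ P → ∀ (D' : Lp ℝ 1 P),
        ((D' : Ω → ℝ) =ᵐ[P] fun ω => (Q'.rnDeriv P ω).toReal) →
        φ D' = ∫ ω, -Y ω ∂Q' := by
      intro Q' hprob hac D' hae
      rw [hXrep D', ← hIF Q' hprob hac D' hae X]
      refine integral_congr_ae (Filter.Eventually.of_forall fun ω => ?_)
      simp [hYdef]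
    -- ρ Y equals the conjugate of Ψ at φ
    have hρY : ρ Y = FMaux.conj Ψ φ := by
      rw [hρ Y]
      refine le_antisymm ?_ ?_
      · refine iSup₂_le fun Q' hQ'K => ?_
        obtain ⟨D', hD'⟩ := hdens Q' hQ'K
        have h1 : Ψ D' = ψ Q' := hΨ_on Q' hQ'K D' hD'
        have h2 : φ D' = ∫ ω, -Y ω ∂Q' :=
          hφdens Q' (hKsub Q' hQ'K).1 (hKsub Q' hQ'K).2 D' hD'
        rw [← h1, ← h2]
        exact le_iSup (fun f => ((φ f : ℝ) : EReal) - Ψ f) D'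
      · refine iSup_le fun f => ?_
        by_cases hf : Ψ f = ⊤
        · rw [hf, EReal.sub_top]
          exact bot_le
        · have hex : ∃ Q' ∈ K, (f : Ω → ℝ) =ᵐ[P] fun ω => (Q'.rnDeriv P ω).toReal := by
            by_contra hnex
            exact hf (hΨ_off f hnex)
          obtain ⟨Q', hQ'K, hae⟩ := hex
          have h1 : Ψ f = ψ Q' := hΨ_on Q' hQ'K f hae
          have h2 : φ f = ∫ ω, -Y ω ∂Q' :=
            hφdens Q' (hKsub Q' hQ'K).1 (hKsub Q' hQ'K).2 f hae
          rw [h1, h2]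
          refine le_trans (le_refl _) ?_
          exact le_iSup₂_of_le Q' hQ'K (le_refl _)
    have hφD : φ D = ∫ ω, -(Y ω) ∂Q := hφdens Q hQprob hQP D hDae
    have hle : ((φ D : ℝ) : EReal) - FMaux.conj Ψ φ ≤ minPenalty ρ Q := by
      have h1 : (((∫ ω, -(Y ω) ∂Q : ℝ) : EReal) - ρ Y) ≤ minPenalty ρ Q :=
        le_iSup (fun X : {X : Ω → ℝ // IsBddMeas X} =>
          (((∫ ω, -(X.1 ω) ∂Q : ℝ) : EReal) - ρ X.1)) ⟨Y, hYbdd⟩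
      rw [hφD, ← hρY]
      exact h1
    exact absurd (lt_of_lt_of_le hφ (hle.trans hc1.le)) (lt_irrefl _)
  · -- easy direction : minPenalty ρ Q ≤ ψ Q
    refine iSup_le fun ⟨X, hXbdd⟩ => ?_
    by_cases hQK : Q ∈ K
    · have h1 : (((∫ ω, -(X ω) ∂Q : ℝ) : EReal) - ψ Q) ≤ ρ X := by
        rw [hρ X]
        exact le_iSup₂_of_le Q hQK (le_refl _)
      exact FMaux.sub_swap_le _ _ _ (hψ_ne_bot Q) h1
    · rw [hψ_top Q hQK]
      exact le_top
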